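/- Exact CMMS does not imply α-CEF1 for any α > 0: in the instance with k classes of k agents each and k−1 items liked by every agent, assigning all k−1 items to a single class is CMMS (every class's maximin share is 0) yet every other class, with value 0, has optimistic value k−1 for the lucky class's bundle even after removing any one item (for k ≥ 3). -/

import Mathlib

open Finset

variable {n m k : ℕ}

/-- A finset of (item, agent) pairs is a partial matching. -/
def IsPartialMatching {I A : Type*} (P : Finset (I × A)) : Prop :=
  ∀ p ∈ P, ∀ q ∈ P, (p.1 = q.1 ∨ p.2 = q.2) → p = q

instance {I A : Type*} [DecidableEq I] [DecidableEq A] (P : Finset (I × A)) :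
    Decidable (IsPartialMatching P) := by
  unfold IsPartialMatching; infer_instance

/-- A matching `X` respects the likes `likes`. -/
def RespectsLikes (likes : Fin m → Finset (Fin n)) (X : Finset (Fin m × Fin n)) : Prop :=
  ∀ p ∈ X, p.2 ∈ likes p.1

instance (likes : Fin m → Finset (Fin n)) (X : Finset (Fin m × Fin n)) :
    Decidable (RespectsLikes likes X) := by
  unfold RespectsLikes; infer_instance

/-- Non-wastefulness (maximality) of an indivisible matching. -/
def NonWastefulOff (likes : Fin m → Finset (Fin n)) (X : Finset (Fin m × Fin n)) : Prop :=
  ∀ (o : Fin m), ∀ a ∈ likes o, (∃ p ∈ X, p.1 = o) ∨ (∃ p ∈ X, p.2 = a)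

/-- The agents of class `i`. -/
def classAgentsOff (classOf : Fin n → Fin k) (i : Fin k) : Finset (Fin n) :=
  Finset.univ.filter fun a => classOf a = i

/-- Optimistic valuation `V*` of the class with agents `C` for the item set `S`. -/
def VstarOff (likes : Fin m → Finset (Fin n)) (C : Finset (Fin n))
    (S : Finset (Fin m)) : ℕ :=
  ((S ×ˢ C).powerset.filter
    (fun P => RespectsLikes likes P ∧ IsPartialMatching P)).sup Finset.card

/-- The set of items matched to class `j` under `X`. -/
def itemsOff (classOf : Fin n → Fin k) (X : Finset (Fin m × Fin n)) (j : Fin k) :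
    Finset (Fin m) :=
  (X.filter fun p => classOf p.2 = j).image Prod.fst

/-- The value of class `i` under `X` (number of items matched to its agents). -/
def valueOff (classOf : Fin n → Fin k) (X : Finset (Fin m × Fin n)) (i : Fin k) : ℕ :=
  (X.filter fun p => classOf p.2 = i).card

/-- `X` is `α`-CEF1. -/
def IsCEF1Off (likes : Fin m → Finset (Fin n)) (classOf : Fin n → Fin k) (α : ℝ)
    (X : Finset (Fin m × Fin n)) : Prop :=
  ∀ i j : Fin k, itemsOff classOf X j = ∅ ∨
    ∃ o ∈ itemsOff classOf X j,
      ((valueOff classOf X i : ℝ)) ≥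
        α * (VstarOff likes (classAgentsOff classOf i) (itemsOff classOf X j \ {o}) : ℝ)

/-- The maximin share of class `i`. -/
noncomputable def mmsOff (likes : Fin m → Finset (Fin n)) (classOf : Fin n → Fin k)
    (i : Fin k) : ℕ :=
  sSup {v : ℕ | ∃ X : Finset (Fin m × Fin n),
    RespectsLikes likes X ∧ IsPartialMatching X ∧
    ∀ j : Fin k, v ≤ VstarOff likes (classAgentsOff classOf i) (itemsOff classOf X j)}

lemma Vstar_empty (likes : Fin m → Finset (Fin n)) (C : Finset (Fin n)) :
    VstarOff likes C ∅ = 0 := by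
  refine Nat.le_antisymm (Finset.sup_le ?_) (Nat.zero_le _)
  intro P hP
  simp only [Finset.mem_filter, Finset.mem_powerset, Finset.empty_product,
    Finset.subset_empty] at hP
  simp [hP.1]

lemma le_Vstar (likes : Fin m → Finset (Fin n)) (C : Finset (Fin n))
    (S : Finset (Fin m)) (P : Finset (Fin m × Fin n))
    (hsub : P ⊆ S ×ˢ C) (h : RespectsLikes likes P) (h2 : IsPartialMatching P) :
    P.card ≤ VstarOff likes C S := by
  apply Finset.le_sup (f := Finset.card)
  simp only [Finset.mem_filter, Finset.mem_powerset]
  exact ⟨hsub, h, h2⟩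

lemma exists_empty_items (hm : m < k) (classOf : Fin n → Fin k)
    (X : Finset (Fin m × Fin n)) (hX : IsPartialMatching X) :
    ∃ j : Fin k, itemsOff classOf X j = ∅ := by
  by_contra h
  push_neg at h
  have hne : ∀ j : Fin k, ∃ o, o ∈ itemsOff classOf X j := by
    intro j
    exact h j
  choose f hf using hne
  have hinj : Function.Injective f := by
    intro j1 j2 he
    obtain ⟨p, hp, hp1⟩ := Finset.mem_image.1 (hf j1)
    obtain ⟨q, hq, hq1⟩ := Finset.mem_image.1 (hf j2)
    rw [Finset.mem_filter] at hp hq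
    have : p = q := hX p hp.1 q hq.1 (Or.inl (by rw [hp1, hq1, he]))
    rw [← hp.2, ← hq.2, this]
  have := Fintype.card_le_of_injective f hinj
  simp at this
  omega

/-- Exact CMMS does not imply `α`-CEF1 for any `α > 0`: for every `k ≥ 3` there is
an instance (`k` classes of `k` agents each, `k − 1` items liked by everyone) and a
matching `X` (all items to one class) such that every class's maximin share is `0`
— so `X` is exactly CMMS — yet `X` is not `α`-CEF1 for any `α > 0`. -/
theorem stmt_15 (k : ℕ) (hk : 3 ≤ k) :
    ∃ (n m : ℕ) (classOf : Fin n → Fin k) (likes : Fin m → Finset (Fin n))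
      (X : Finset (Fin m × Fin n)),
      RespectsLikes likes X ∧ IsPartialMatching X ∧
      (∀ i : Fin k, mmsOff likes classOf i = 0) ∧
      (∀ i : Fin k, mmsOff likes classOf i ≤ valueOff classOf X i) ∧
      ∀ α : ℝ, 0 < α → ¬ IsCEF1Off likes classOf α X := by
  have hk1 : (1 : ℕ) < k := by omega
  have hk0 : (0 : ℕ) < k := by omega
  set classOf : Fin k → Fin k :=
    fun a => if (a : ℕ) = k - 1 then ⟨1, hk1⟩ else ⟨0, hk0⟩ with hcl
  set likes : Fin (k - 1) → Finset (Fin k) := fun _ => Finset.univ with hl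
  set X : Finset (Fin (k - 1) × Fin k) :=
    Finset.univ.image fun o : Fin (k - 1) => (o, Fin.castLE (Nat.sub_le k 1) o) with hX
  have hmatch : IsPartialMatching X := by
    intro p hp q hq hor
    simp only [hX, Finset.mem_image, Finset.mem_univ, true_and] at hp hq
    obtain ⟨o, rfl⟩ := hp
    obtain ⟨o', rfl⟩ := hq
    rcases hor with h | h
    · simp_all
    · have : (o : ℕ) = (o' : ℕ) := by simpa using congrArg Fin.val h
      simp [Fin.ext_iff, this]
  have hmms : ∀ i : Fin k, mmsOff likes classOf i = 0 := by
    intro i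
    have hset : {v : ℕ | ∃ Y : Finset (Fin (k - 1) × Fin k),
        RespectsLikes likes Y ∧ IsPartialMatching Y ∧
        ∀ j : Fin k, v ≤ VstarOff likes (classAgentsOff classOf i)
          (itemsOff classOf Y j)} = {0} := by
      ext v
      simp only [Set.mem_setOf_eq, Set.mem_singleton_iff]
      constructor
      · rintro ⟨Y, h1, h2, h3⟩
        obtain ⟨j, hj⟩ := exists_empty_items (by omega) classOf Y h2
        have := h3 j
        rw [hj, Vstar_empty] at this
        omega
      · rintro rfl
        exact ⟨∅, by intro p hp; simp at hp, by intro p hp; simp at hp,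
          fun j => Nat.zero_le _⟩
    unfold mmsOff
    rw [hset, csSup_singleton]
  -- items of class 0 is everything
  have hclass0 : ∀ p ∈ X, classOf p.2 = ⟨0, hk0⟩ := by
    intro p hp
    simp only [hX, Finset.mem_image, Finset.mem_univ, true_and] at hp
    obtain ⟨o, rfl⟩ := hp
    have hne : (o : ℕ) ≠ k - 1 := by have := o.isLt; omega
    simp [hcl, hne]
  have hitems0 : itemsOff classOf X ⟨0, hk0⟩ = Finset.univ := by
    apply Finset.eq_univ_of_forall
    intro o
    simp only [itemsOff, Finset.mem_image, Finset.mem_filter]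
    refine ⟨(o, Fin.castLE (Nat.sub_le k 1) o), ⟨?_, ?_⟩, rfl⟩
    · simp [hX]
    · exact hclass0 _ (by simp [hX])
  have hvalue1 : valueOff classOf X ⟨1, hk1⟩ = 0 := by
    unfold valueOff
    rw [Finset.card_eq_zero, Finset.filter_eq_empty_iff]
    intro p hp
    rw [hclass0 p hp]
    simp [Fin.ext_iff]
  refine ⟨k, k - 1, classOf, likes, X, ?_, hmatch, hmms,
    fun i => by rw [hmms i]; exact Nat.zero_le _, ?_⟩
  · intro p _; simp [hl]
  · intro α hα hC
    have := hC ⟨1, hk1⟩ ⟨0, hk0⟩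
    rw [hitems0] at this
    rcases this with h | ⟨o, _, hge⟩
    · have : (Finset.univ : Finset (Fin (k - 1))).Nonempty :=
        ⟨⟨0, by omega⟩, Finset.mem_univ _⟩
      rw [h] at this
      exact Finset.not_nonempty_empty this
    · -- Vstar of univ \ {o} is at least 1
      have hodd : ∃ o' : Fin (k - 1), o' ≠ o := by
        by_contra hall
        push_neg at hall
        have h0 : (⟨0, by omega⟩ : Fin (k - 1)) = o := hall _
        have h1 : (⟨1, by omega⟩ : Fin (k - 1)) = o := hall _
        rw [← h1] at h0
        simp [Fin.ext_iff] at h0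
      obtain ⟨o', ho'⟩ := hodd
      have hagent : (⟨k - 1, by omega⟩ : Fin k) ∈ classAgentsOff classOf ⟨1, hk1⟩ := by
        simp [classAgentsOff, hcl]
      have hP : ({(o', (⟨k - 1, by omega⟩ : Fin k))} :
          Finset (Fin (k - 1) × Fin k)).card ≤
          VstarOff likes (classAgentsOff classOf ⟨1, hk1⟩)
            (Finset.univ \ {o}) := by
        apply le_Vstar
        · intro p hp
          rw [Finset.mem_singleton] at hp
          subst hp
          rw [Finset.mem_product]
          exact ⟨by simp [ho'], hagent⟩
        · intro p _; simp [hl]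
        · intro p hp q hq _
          rw [Finset.mem_singleton] at hp hq
          rw [hp, hq]
      rw [Finset.card_singleton] at hP
      rw [hvalue1] at hge
      have hpos : (0 : ℝ) < α * (VstarOff likes (classAgentsOff classOf ⟨1, hk1⟩)
          (Finset.univ \ {o}) : ℝ) := by
        apply mul_pos hα
        exact_mod_cast Nat.lt_of_lt_of_le Nat.zero_lt_one hP
      push_cast at hge
      linarith
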